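/- In a simply-laced Coxeter group, an element w is fully commutative (any reduced word for w can be obtained from any other by interchanges of adjacent commuting generators) if and only if no reduced word for w contains a subword of the form [i, j, i] where the generators sᵢ and sⱼ do not commute. -/

import Mathlib

/-- Two words are related by a commutation move: interchanging two adjacent letters `i, j`
whose generators commute (`M i j = 2`). -/
def CommMove {B : Type*} (M : CoxeterMatrix B) (w v : List B) : Prop :=
  ∃ (a b : List B) (i j : B), M i j = 2 ∧ w = a ++ i :: j :: b ∧ v = a ++ j :: i :: b

/-- An element `w` of a Coxeter group is fully commutative if any reduced word for `w` can
be obtained from any other by a sequence of interchanges of adjacent commuting generators. -/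
def FullyCommutative {B W : Type*} [Group W] {M : CoxeterMatrix B}
    (cs : CoxeterSystem M W) (w : W) : Prop :=
  ∀ u v : List B, cs.IsReduced u → cs.IsReduced v →
    cs.wordProd u = w → cs.wordProd v = w → Relation.ReflTransGen (CommMove M) u v


namespace StembridgeAux

open CoxeterSystem List

open scoped Classical

section Generic

variable {W : Type*} [Group W]

lemma mul_mul_eq_iff (g h y x : W) : g * x * h = y ↔ x = g⁻¹ * y * h⁻¹ := by
  constructor
  · rintro rfl; group
  · rintro rfl; group

lemma semiconj_pow (a b : W) (n : ℕ) : b * (a * b) ^ n = (b * a) ^ n * b := by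
  have : SemiconjBy b (a * b) (b * a) := (mul_assoc b a b).symm
  exact (this.pow_right n).eq

variable {a b : W} (ha : a⁻¹ = a) (hb : b⁻¹ = b)

include ha hb

lemma inv_mul_pow : ((a * b) ^ n)⁻¹ = (b * a) ^ n := by
  rw [← inv_pow, mul_inv_rev, ha, hb]

lemma aux0 (t : W) (n : ℕ) :
    (a * b) * ((a * b) ^ n * t * ((a * b) ^ n)⁻¹) * (b * a)
      = (a * b) ^ (n + 1) * t * ((a * b) ^ (n + 1))⁻¹ := by
  have h : b * a = (a * b)⁻¹ := by rw [mul_inv_rev, ha, hb]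
  rw [h, pow_succ', mul_inv_rev]
  simp [mul_assoc]

lemma aux1 (n : ℕ) : ((a * b) ^ n)⁻¹ * b * (a * b) ^ n = (b * a) ^ (2 * n) * b := by
  rw [inv_mul_pow ha hb, mul_assoc, semiconj_pow, ← mul_assoc, ← pow_add, two_mul]

lemma aux2 (n : ℕ) :
    ((a * b) ^ n)⁻¹ * (b * a * b) * (a * b) ^ n = (b * a) ^ (2 * n + 1) * b := by
  rw [inv_mul_pow ha hb]
  calc (b * a) ^ n * (b * a * b) * (a * b) ^ n
      = (b * a) ^ n * (b * a) * (b * (a * b) ^ n) := by simp [mul_assoc]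
    _ = (b * a) ^ (n + 1) * ((b * a) ^ n * b) := by rw [← pow_succ, semiconj_pow]
    _ = ((b * a) ^ (n + 1) * (b * a) ^ n) * b := by rw [← mul_assoc]
    _ = (b * a) ^ (2 * n + 1) * b := by rw [← pow_add]; congr 2; omega

end Generic

variable {B W : Type*} [Group W] {M : CoxeterMatrix B} (cs : CoxeterSystem M W)

local prefix:100 "s" => cs.simple
local prefix:100 "π" => cs.wordProd
local prefix:100 "ℓ" => cs.length
local prefix:100 "ris" => cs.rightInvSeq

/-- The reflection-parity permutation attached to a simple generator. -/
noncomputable def etaFun (i : B) : W × ZMod 2 → W × ZMod 2 :=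
  fun p => (s i * p.1 * s i, p.2 + if p.1 = s i then 1 else 0)

lemma etaFun_involutive (i : B) : Function.Involutive (etaFun cs i) := by
  rintro ⟨t, z⟩
  simp only [etaFun]
  have h1 : s i * (s i * t * s i) * s i = t := by
    simp [← mul_assoc]
  have h2 : (s i * t * s i = s i) ↔ (t = s i) := by
    rw [mul_mul_eq_iff]; simp
  simp only [h1, h2]
  rcases eq_or_ne t (s i) with rfl | h
  · have h3 : (1 : ZMod 2) + 1 = 0 := by decide
    simp [add_assoc, h3]
  · simp [h]

noncomputable def eta (i : B) : Equiv.Perm (W × ZMod 2) := (etaFun_involutive cs i).toPerm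

lemma eta_apply (i : B) (t : W) (z : ZMod 2) :
    eta cs i (t, z) = (s i * t * s i, z + if t = s i then 1 else 0) := rfl

lemma eta_mul_pow_apply (i j : B) (n : ℕ) (t : W) (z : ZMod 2) :
    ((eta cs i * eta cs j) ^ n) (t, z) =
      ((s i * s j) ^ n * t * ((s i * s j) ^ n)⁻¹,
        z + ∑ k ∈ Finset.range (2 * n), (if t = (s j * s i) ^ k * s j then 1 else 0)) := by
  have hi : (s i)⁻¹ = s i := cs.inv_simple i
  have hj : (s j)⁻¹ = s j := cs.inv_simple j
  induction n generalizing z with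
  | zero => simp
  | succ n ih =>
    rw [pow_succ', Equiv.Perm.mul_apply, ih]
    have hstep : ∀ t' z', (eta cs i * eta cs j) (t', z') =
        ((s i * s j) * t' * (s j * s i),
          z' + ((if t' = s j then 1 else 0) + if t' = s j * s i * s j then (1 : ZMod 2) else 0)) := by
      intro t' z'
      rw [Equiv.Perm.mul_apply, eta_apply, eta_apply]
      have hiff : (s j * t' * s j = s i) ↔ (t' = s j * s i * s j) := by
        rw [mul_mul_eq_iff]; simp
      simp only [hiff, Prod.mk.injEq]
      constructor
      · simp [← mul_assoc]
      · ring
    rw [hstep]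
    simp only [Prod.mk.injEq]
    constructor
    · exact aux0 hi hj t n
    · have c1 : ((s i * s j) ^ n * t * ((s i * s j) ^ n)⁻¹ = s j) ↔ (t = (s j * s i) ^ (2 * n) * s j) := by
        rw [mul_mul_eq_iff, inv_inv, aux1 hi hj]
      have c2 : ((s i * s j) ^ n * t * ((s i * s j) ^ n)⁻¹ = s j * s i * s j)
          ↔ (t = (s j * s i) ^ (2 * n + 1) * s j) := by
        rw [mul_mul_eq_iff, inv_inv, aux2 hi hj]
      rw [c1, c2]
      rw [show 2 * (n + 1) = (2 * n + 1) + 1 by ring, Finset.sum_range_succ, Finset.sum_range_succ]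
      ring

lemma eta_liftable : CoxeterMatrix.IsLiftable M (eta cs) := by
  intro i j
  ext ⟨t, z⟩ : 1
  rw [eta_mul_pow_apply]
  have h1 : (s i * s j) ^ M i j = 1 := cs.simple_mul_simple_pow i j
  have h2 : (s j * s i) ^ M i j = 1 := cs.simple_mul_simple_pow' i j
  have hper : ∀ k : ℕ, (s j * s i) ^ (M i j + k) = (s j * s i) ^ k := by
    intro k; rw [pow_add, h2, one_mul]
  have hsum : ∑ k ∈ Finset.range (2 * M i j), (if t = (s j * s i) ^ k * s j then (1 : ZMod 2) else 0) = 0 := by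
    rw [two_mul, Finset.range_eq_Ico,
      ← Finset.sum_Ico_consecutive _ (Nat.zero_le (M i j)) (Nat.le_add_right _ _),
      Finset.sum_Ico_eq_sum_range, Finset.sum_Ico_eq_sum_range]
    simp only [Nat.sub_zero, Nat.zero_add, Nat.add_sub_cancel_left, hper]
    rw [← Finset.sum_add_distrib]
    have h0 : ∀ x : ZMod 2, x + x = 0 := by decide
    simp [h0]
  rw [h1, hsum]
  simp only [one_mul, inv_one, mul_one, add_zero, Equiv.Perm.coe_one, id_eq]

/-- The parity homomorphism. -/
noncomputable def phi : W →* Equiv.Perm (W × ZMod 2) := cs.lift ⟨eta cs, eta_liftable cs⟩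

lemma phi_simple (i : B) : phi cs (s i) = eta cs i := cs.lift_apply_simple (eta_liftable cs) i

lemma phi_wordProd (ω : List B) (t : W) (z : ZMod 2) :
    phi cs (π ω) (t, z) = (π ω * t * (π ω)⁻¹, z + ((ris ω).count t : ZMod 2)) := by
  induction ω generalizing t z with
  | nil => simp
  | cons i ω ih =>
    rw [cs.wordProd_cons, map_mul, Equiv.Perm.mul_apply, ih, phi_simple, eta_apply]
    have hiff : (π ω * t * (π ω)⁻¹ = s i) ↔ (t = (π ω)⁻¹ * s i * π ω) := by
      rw [mul_mul_eq_iff, inv_inv]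
    have hris : cs.rightInvSeq (i :: ω) = ((π ω)⁻¹ * s i * π ω) :: cs.rightInvSeq ω := rfl
    rw [hris]
    simp only [Prod.mk.injEq, hiff]
    constructor
    · simp [← mul_assoc, mul_inv_rev]
    · rw [List.count_cons]
      rcases eq_or_ne t ((π ω)⁻¹ * s i * π ω) with rfl | h
      · simp only [if_pos rfl, beq_self_eq_true, if_true]
        push_cast
        ring
      · simp only [if_neg h]
        have : (((π ω)⁻¹ * s i * π ω : W) == t) = false := by
          simp [Ne.symm h]
        rw [this]
        simp

lemma reverse_eraseIdx_reverse {α : Type*} (l : List α) (k : ℕ) (hk : k < l.length) :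
    (l.reverse.eraseIdx k).reverse = l.eraseIdx (l.length - 1 - k) := by
  rw [List.eraseIdx_eq_take_drop_succ, List.eraseIdx_eq_take_drop_succ, List.reverse_append,
    List.reverse_drop, List.reverse_take, List.reverse_reverse, List.length_reverse]
  congr 1
  · congr 1; omega
  · congr 1; omega

lemma snd_phi (ω : List B) (t : W) :
    (phi cs (π ω) (t, 0)).2 = ((ris ω).count t : ZMod 2) := by
  rw [phi_wordProd]; exact zero_add _

lemma mem_ris_exchange {ω : List B} {i : B}
    (h : ((ris ω).count (s i) : ZMod 2) = 1) :
    ∃ k, ∃ _ : k < ω.length, π ω * s i = π (ω.eraseIdx k) := by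
  have hmem : s i ∈ ris ω := by
    by_contra hmem
    rw [List.count_eq_zero_of_not_mem hmem] at h
    exact absurd h (by decide)
  obtain ⟨k, hk, hget⟩ := List.mem_iff_getElem.mp hmem
  have hk' : k < ω.length := by simpa using hk
  refine ⟨k, hk', ?_⟩
  rw [← cs.wordProd_mul_getD_rightInvSeq ω k]
  congr 1
  rw [List.getD_eq_getElem _ _ hk, hget]

lemma descent_of_phi_eq_one {w : W} {i : B} (h : (phi cs w (s i, 0)).2 = 1) :
    ℓ (w * s i) < ℓ w := by
  obtain ⟨ω, hred, rfl⟩ := cs.exists_reduced_word' w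
  rw [snd_phi] at h
  obtain ⟨k, hk, heq⟩ := mem_ris_exchange cs h
  rw [heq]
  calc ℓ (π (ω.eraseIdx k)) ≤ (ω.eraseIdx k).length := cs.length_wordProd_le _
    _ < ω.length := by
        have := List.length_eraseIdx_add_one hk
        omega
    _ = ℓ (π ω) := hred.symm

lemma phi_eq_one_of_descent {w : W} {i : B} (h : ℓ (w * s i) < ℓ w) :
    (phi cs w (s i, 0)).2 = 1 := by
  rcases (by decide : ∀ x : ZMod 2, x = 0 ∨ x = 1) ((phi cs w (s i, 0)).2) with h0 | h1
  swap
  · exact h1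
  exfalso
  have key : (phi cs (w * s i) (s i, 0)).2 = 1 := by
    rw [map_mul, Equiv.Perm.mul_apply]
    have hsi : phi cs (s i) (s i, (0 : ZMod 2)) = (s i, 1) := by
      rw [phi_simple, eta_apply]
      simp
    rw [hsi]
    obtain ⟨ω, hred, rfl⟩ := cs.exists_reduced_word' w
    rw [phi_wordProd]
    rw [snd_phi] at h0
    simp only
    rw [h0]
    decide
  have := descent_of_phi_eq_one cs key
  rw [mul_assoc, cs.simple_mul_simple_self, mul_one] at this
  omega

lemma rightExchange {ω : List B} {i : B} (h : ℓ (π ω * s i) < ℓ (π ω)) :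
    ∃ k, ∃ _ : k < ω.length, π ω * s i = π (ω.eraseIdx k) := by
  have hB := phi_eq_one_of_descent cs h
  rw [snd_phi] at hB
  exact mem_ris_exchange cs hB

lemma leftExchange {ω : List B} {i : B} (h : ℓ (s i * π ω) < ℓ (π ω)) :
    ∃ k, ∃ _ : k < ω.length, s i * π ω = π (ω.eraseIdx k) := by
  have h' : ℓ (π ω.reverse * s i) < ℓ (π ω.reverse) := by
    rw [cs.wordProd_reverse]
    have e1 : (π ω)⁻¹ * s i = (s i * π ω)⁻¹ := by
      rw [mul_inv_rev, cs.inv_simple]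
    rw [e1, cs.length_inv, cs.length_inv]
    exact h
  obtain ⟨k, hk, heq⟩ := rightExchange cs h'
  rw [List.length_reverse] at hk
  refine ⟨ω.length - 1 - k, by omega, ?_⟩
  rw [cs.wordProd_reverse] at heq
  have : s i * π ω = (π (ω.reverse.eraseIdx k))⁻¹ := by
    rw [← heq, mul_inv_rev, inv_inv, cs.inv_simple]
  rw [this, ← cs.wordProd_reverse, reverse_eraseIdx_reverse ω k hk]

end StembridgeAux


namespace StembridgeGeo

open scoped Classical

variable {B : Type*} (M : CoxeterMatrix B)

noncomputable def kk (a b : B) : ℚ := if a = b then 1 else if M a b = 3 then -(1/2) else 0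

lemma kk_self (a : B) : kk M a a = 1 := by simp [kk]

lemma kk_two {a b : B} (h : a ≠ b) (h2 : M a b = 2) : kk M a b = 0 := by
  simp [kk, h, h2]

lemma kk_three {a b : B} (h : a ≠ b) (h3 : M a b = 3) : kk M a b = -(1/2) := by
  simp [kk, h, h3]

noncomputable def fform (a : B) : (B →₀ ℚ) →ₗ[ℚ] ℚ :=
  Finsupp.linearCombination ℚ (fun b => kk M a b)

lemma fform_single (a b : B) : fform M a (Finsupp.single b 1) = kk M a b := by
  simp [fform, Finsupp.linearCombination_single]

noncomputable def sig (a : B) : Module.End ℚ (B →₀ ℚ) :=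
  LinearMap.id - (2 : ℚ) • (fform M a).smulRight (Finsupp.single a 1)

lemma sig_apply (a : B) (x : B →₀ ℚ) :
    sig M a x = x - (2 * fform M a x) • Finsupp.single a 1 := by
  simp [sig, LinearMap.sub_apply, LinearMap.smul_apply, LinearMap.smulRight_apply, smul_smul]

lemma sig_sig (a : B) (x : B →₀ ℚ) : sig M a (sig M a x) = x := by
  rw [sig_apply, sig_apply, map_sub, map_smul, fform_single, kk_self, smul_eq_mul, mul_one]
  module

lemma sig_comm {a b : B} (hab : a ≠ b) (h2 : M a b = 2) (x : B →₀ ℚ) :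
    sig M a (sig M b (sig M a (sig M b x))) = x := by
  have hba : M b a = 2 := (M.symmetric a b) ▸ h2
  have e1 : fform M a (Finsupp.single b 1) = 0 := by rw [fform_single, kk_two M hab h2]
  have e2 : fform M b (Finsupp.single a 1) = 0 := by rw [fform_single, kk_two M hab.symm hba]
  have e3 : fform M a (Finsupp.single a 1) = 1 := by rw [fform_single, kk_self]
  have e4 : fform M b (Finsupp.single b 1) = 1 := by rw [fform_single, kk_self]
  simp only [sig_apply, map_sub, map_smul, e1, e2, e3, e4, smul_eq_mul]
  module

lemma sig_braid {a b : B} (hab : a ≠ b) (h3 : M a b = 3) (x : B →₀ ℚ) :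
    sig M a (sig M b (sig M a (sig M b (sig M a (sig M b x))))) = x := by
  have hba : M b a = 3 := (M.symmetric a b) ▸ h3
  have e1 : fform M a (Finsupp.single b 1) = -(1/2) := by rw [fform_single, kk_three M hab h3]
  have e2 : fform M b (Finsupp.single a 1) = -(1/2) := by rw [fform_single, kk_three M hab.symm hba]
  have e3 : fform M a (Finsupp.single a 1) = 1 := by rw [fform_single, kk_self]
  have e4 : fform M b (Finsupp.single b 1) = 1 := by rw [fform_single, kk_self]
  simp only [sig_apply, map_sub, map_smul, e1, e2, e3, e4, smul_eq_mul]
  ring_nf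
  module

/-- `sig` as a unit of the endomorphism ring. -/
noncomputable def sigU (a : B) : (Module.End ℚ (B →₀ ℚ))ˣ where
  val := sig M a
  inv := sig M a
  val_inv := LinearMap.ext fun x => by
    simp only [Module.End.mul_apply, Module.End.one_apply, sig_sig]
  inv_val := LinearMap.ext fun x => by
    simp only [Module.End.mul_apply, Module.End.one_apply, sig_sig]

lemma sigU_liftable (hsl : ∀ i j : B, i ≠ j → M i j = 2 ∨ M i j = 3) :
    CoxeterMatrix.IsLiftable M (sigU M) := by
  intro i j
  rcases eq_or_ne i j with rfl | hij
  · rw [M.diagonal i, pow_one]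
    refine Units.ext (LinearMap.ext fun x => ?_)
    rw [Units.val_mul]
    simp only [Module.End.mul_apply, Units.val_one, Module.End.one_apply]
    exact sig_sig M i x
  rcases hsl i j hij with h2 | h3
  · rw [h2]
    refine Units.ext (LinearMap.ext fun x => ?_)
    rw [Units.val_pow_eq_pow_val, Units.val_mul]
    simp only [pow_succ, pow_zero, one_mul, Module.End.mul_apply, Units.val_one,
      Module.End.one_apply]
    exact sig_comm M hij h2 x
  · rw [h3]
    refine Units.ext (LinearMap.ext fun x => ?_)
    rw [Units.val_pow_eq_pow_val, Units.val_mul]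
    simp only [pow_succ, pow_zero, one_mul, Module.End.mul_apply, Units.val_one,
      Module.End.one_apply]
    exact sig_braid M hij h3 x

section Faithful

variable {W : Type*} [Group W] {M : CoxeterMatrix B} (cs : CoxeterSystem M W)
  (hsl : ∀ i j : B, i ≠ j → M i j = 2 ∨ M i j = 3)

local prefix:100 "s" => cs.simple

/-- The simply-laced geometric representation. -/
noncomputable def rho : W →* (Module.End ℚ (B →₀ ℚ))ˣ :=
  cs.lift ⟨sigU M, sigU_liftable M hsl⟩

lemma rho_simple (i : B) : rho cs hsl (s i) = sigU M i :=
  cs.lift_apply_simple (sigU_liftable M hsl) i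

include hsl

lemma simple_ne {i j : B} (hij : i ≠ j) : s i ≠ s j := by
  intro h
  have h1 : sigU M i = sigU M j := by
    rw [← rho_simple cs hsl i, ← rho_simple cs hsl j, h]
  have h2 : sig M i (Finsupp.single j 1) = sig M j (Finsupp.single j 1) := by
    rw [show sig M i = (sigU M i).val from rfl, show sig M j = (sigU M j).val from rfl, h1]
  have h3 := congrArg (fun y => y j) h2
  rw [sig_apply, sig_apply, fform_single, fform_single, kk_self] at h3
  simp only [Finsupp.sub_apply, Finsupp.smul_apply, Finsupp.single_eq_same,
    Finsupp.single_eq_of_ne' hij, smul_eq_mul] at h3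
  norm_num at h3

lemma simple_braid_sq_ne_one {i j : B} (hij : i ≠ j) (h3 : M i j = 3) :
    (s i * s j) * (s i * s j) ≠ 1 := by
  intro h
  have h1 : ((sigU M i : (Module.End ℚ (B →₀ ℚ))ˣ) * sigU M j) * (sigU M i * sigU M j) = 1 := by
    rw [← rho_simple cs hsl i, ← rho_simple cs hsl j, ← map_mul, ← map_mul, h, map_one]
  have h2 : sig M i (sig M j (sig M i (sig M j (Finsupp.single i 1)))) = Finsupp.single i 1 := by
    have := congrArg (fun u : (Module.End ℚ (B →₀ ℚ))ˣ => u.val (Finsupp.single i 1)) h1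
    simp only [Units.val_mul, Module.End.mul_apply, Units.val_one, Module.End.one_apply] at this
    exact this
  have hba : M j i = 3 := (M.symmetric i j) ▸ h3
  have e1 : fform M i (Finsupp.single j 1) = -(1/2) := by rw [fform_single, kk_three M hij h3]
  have e2 : fform M j (Finsupp.single i 1) = -(1/2) := by rw [fform_single, kk_three M hij.symm hba]
  have e3 : fform M i (Finsupp.single i 1) = 1 := by rw [fform_single, kk_self]
  have e4 : fform M j (Finsupp.single j 1) = 1 := by rw [fform_single, kk_self]
  simp only [sig_apply, map_sub, map_smul, e1, e2, e3, e4, smul_eq_mul] at h2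
  have h4 := congrArg (fun y => y j) h2
  simp only [Finsupp.sub_apply, Finsupp.smul_apply, Finsupp.single_eq_same,
    Finsupp.single_eq_of_ne hij, Finsupp.single_eq_of_ne hij.symm, smul_eq_mul] at h4
  norm_num at h4

end Faithful

end StembridgeGeo

namespace StembridgeMain


open CoxeterSystem List StembridgeAux StembridgeGeo

open scoped Classical

variable {B W : Type*} [Group W] {M : CoxeterMatrix B} (cs : CoxeterSystem M W)

local prefix:100 "s" => cs.simple
local prefix:100 "π" => cs.wordProd
local prefix:100 "ℓ" => cs.length

lemma commMove_symm {u v : List B} (h : CommMove M u v) : CommMove M v u := by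
  obtain ⟨a, b, i, j, h2, rfl, rfl⟩ := h
  exact ⟨a, b, j, i, by rw [M.symmetric j i]; exact h2, rfl, rfl⟩

lemma commMove_cons (c : B) {u v : List B} (h : CommMove M u v) :
    CommMove M (c :: u) (c :: v) := by
  obtain ⟨a, b, i, j, h2, rfl, rfl⟩ := h
  exact ⟨c :: a, b, i, j, h2, rfl, rfl⟩

lemma rtg_cons (c : B) {u v : List B} (h : Relation.ReflTransGen (CommMove M) u v) :
    Relation.ReflTransGen (CommMove M) (c :: u) (c :: v) :=
  Relation.ReflTransGen.lift (c :: ·) (fun _ _ h' => commMove_cons c h') _ _ h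

lemma rtg_symm {u v : List B} (h : Relation.ReflTransGen (CommMove M) u v) :
    Relation.ReflTransGen (CommMove M) v u :=
  haveI : Std.Symm (CommMove M) := ⟨fun _ _ h' => commMove_symm h'⟩
  Std.Symm.symm _ _ h

lemma commMove_count {u v : List B} (h : CommMove M u v) (c : B) :
    u.count c = v.count c := by
  obtain ⟨a, b, i, j, _, rfl, rfl⟩ := h
  simp only [List.count_append, List.count_cons]
  omega

lemma rtg_count {u v : List B} (h : Relation.ReflTransGen (CommMove M) u v) (c : B) :
    u.count c = v.count c := by
  induction h with
  | refl => rfl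
  | tail _ hstep ih => exact ih.trans (commMove_count hstep c)

/-- The right-hand side condition: no reduced word for `w` contains a braid pattern. -/
def NoBraid (w : W) : Prop :=
  ¬ ∃ (u : List B) (i j : B), cs.IsReduced u ∧ cs.wordProd u = w ∧
      M i j ≠ 2 ∧ i ≠ j ∧ [i, j, i] <:+: u

lemma noBraid_step {w : W} {i : B} (hdesc : ℓ (s i * w) < ℓ w) (h : NoBraid cs w) :
    NoBraid cs (s i * w) := by
  rintro ⟨t, p, q, hred, hprod, hne, hpq, hinf⟩
  have hlen : ℓ (s i * w) + 1 = ℓ w := by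
    rcases cs.length_simple_mul w i with h' | h'
    · omega
    · exact h'
  refine h ⟨i :: t, p, q, ?_, ?_, hne, hpq, ?_⟩
  · show ℓ (π (i :: t)) = (i :: t).length
    rw [cs.wordProd_cons, hprod, cs.simple_mul_simple_cancel_left, List.length_cons]
    rw [show t.length = ℓ (π t) from hred.symm, hprod]
    omega
  · rw [cs.wordProd_cons, hprod, cs.simple_mul_simple_cancel_left]
  · obtain ⟨x, y, rfl⟩ := hinf
    exact ⟨i :: x, y, rfl⟩

lemma braid_rel {i j : B} (h3 : M i j = 3) : s i * s j * s i = s j * s i * s j := by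
  have h6 := cs.simple_mul_simple_pow i j
  rw [h3] at h6
  have h7 : (s i * s j * s i) * (s j * (s i * s j)) = 1 := by
    rw [← h6, show (3 : ℕ) = 2 + 1 from rfl, pow_succ, pow_two]
    simp [mul_assoc]
  have h8 : s i * s j * s i = (s j * (s i * s j))⁻¹ := eq_inv_of_mul_eq_one_left h7
  rw [h8]
  simp [mul_inv_rev, mul_assoc]

lemma comm_rel {i j : B} (h2 : M i j = 2) : s i * s j = s j * s i := by
  have h6 := cs.simple_mul_simple_pow i j
  rw [h2] at h6
  have h8 : s i * s j = (s i * s j)⁻¹ := by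
    rw [pow_two] at h6
    exact eq_inv_of_mul_eq_one_left h6
  rw [h8, mul_inv_rev, cs.inv_simple, cs.inv_simple]


-- CORE (concatenated in namespace StembridgeMain context)

lemma main_induction (hsl : ∀ i j : B, i ≠ j → M i j = 2 ∨ M i j = 3) :
    ∀ (n : ℕ) (w : W), NoBraid cs w → ∀ u v : List B, cs.IsReduced u → cs.IsReduced v →
      π u = w → π v = w → u.length = n → Relation.ReflTransGen (CommMove M) u v := by
  intro n
  induction n using Nat.strong_induction_on with
  | _ n ih =>
  intro w hw u v hu hv hpu hpv hlen
  have hlw : ℓ w = n := by rw [← hpu, hu, hlen]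
  have hlv : v.length = n := by rw [← hv, hpv, hlw]
  rcases u with _ | ⟨i, u'⟩
  · -- u = []
    have hw1 : w = 1 := by rw [← hpu, cs.wordProd_nil]
    have : v = [] := by
      apply List.length_eq_zero_iff.mp
      rw [hlv, ← hlw, hw1, cs.length_one]
    subst this
    exact Relation.ReflTransGen.refl
  rcases v with _ | ⟨j, v'⟩
  · -- v = [], u nonempty: impossible
    exfalso
    have hw1 : w = 1 := by rw [← hpv, cs.wordProd_nil]
    rw [hw1, cs.length_one] at hlw
    simp [← hlen] at hlw
  -- basic length facts
  have hn1 : u'.length + 1 = n := by simpa using hlen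
  have hn1' : v'.length + 1 = n := by simpa using hlv
  have hpu' : π u' = s i * w := by
    rw [← hpu, cs.wordProd_cons, cs.simple_mul_simple_cancel_left]
  have hpv' : π v' = s j * w := by
    rw [← hpv, cs.wordProd_cons, cs.simple_mul_simple_cancel_left]
  have hliw : ℓ (s i * w) = n - 1 := by
    have h1 : ℓ (s i * w) ≤ u'.length := hpu' ▸ cs.length_wordProd_le u'
    rcases cs.length_simple_mul w i with h' | h' <;> omega
  have hljw : ℓ (s j * w) = n - 1 := by
    have h1 : ℓ (s j * w) ≤ v'.length := hpv' ▸ cs.length_wordProd_le v'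
    rcases cs.length_simple_mul w j with h' | h' <;> omega
  have hu'red : cs.IsReduced u' := by
    show ℓ (π u') = u'.length
    rw [hpu', hliw]; omega
  have hv'red : cs.IsReduced v' := by
    show ℓ (π v') = v'.length
    rw [hpv', hljw]; omega
  have hdesci : ℓ (s i * w) < ℓ w := by omega
  have hdescj : ℓ (s j * w) < ℓ w := by omega
  have hnbi : NoBraid cs (s i * w) := noBraid_step cs hdesci hw
  have hnbj : NoBraid cs (s j * w) := noBraid_step cs hdescj hw
  rcases eq_or_ne i j with rfl | hij
  · -- same first letter
    exact rtg_cons i (ih u'.length (by omega) (s i * w) hnbi u' v' hu'red hv'red hpu' hpv' rfl)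
  -- distinct first letters
  have hsne : s i ≠ s j := simple_ne cs hsl hij
  have hdesc_i' : ℓ (s i * π (j :: v')) < ℓ (π (j :: v')) := by
    rw [hpv]; omega
  obtain ⟨k, hk, heq⟩ := leftExchange cs hdesc_i'
  rw [hpv] at heq
  rcases Nat.eq_zero_or_pos k with rfl | hkpos
  · exfalso
    rw [List.eraseIdx_cons_zero, hpv'] at heq
    exact hsne (mul_right_cancel heq)
  obtain ⟨k', rfl⟩ : ∃ k', k = k' + 1 := ⟨k - 1, by omega⟩
  rw [List.eraseIdx_cons_succ, cs.wordProd_cons] at heq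
  have hk'lt : k' < v'.length := by
    simp only [List.length_cons] at hk; omega
  set t0 := v'.eraseIdx k' with ht0def
  -- heq : s i * w = s j * π t0
  have hpt0 : π t0 = s j * (s i * w) := by
    rw [heq, cs.simple_mul_simple_cancel_left]
  have hlt0 : t0.length + 2 = n := by
    have hlen_erase := List.length_eraseIdx_add_one hk'lt
    rw [← ht0def] at hlen_erase
    omega
  have hljiw : ℓ (s j * (s i * w)) = n - 2 := by
    have h1 : ℓ (s j * (s i * w)) ≤ t0.length := hpt0 ▸ cs.length_wordProd_le t0
    rcases cs.length_simple_mul (s i * w) j with h' | h' <;> omega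
  have ht0red : cs.IsReduced t0 := by
    show ℓ (π t0) = t0.length
    rw [hpt0, hljiw]; omega
  -- rule out M i j = 3
  have hM2 : M i j = 2 := by
    by_contra hM2
    have h3 : M i j = 3 := (hsl i j hij).resolve_left hM2
    have hu2prod : π (i :: j :: t0) = w := by
      rw [cs.wordProd_cons, cs.wordProd_cons, hpt0, cs.simple_mul_simple_cancel_left,
        cs.simple_mul_simple_cancel_left]
    have hu2red : cs.IsReduced (i :: j :: t0) := by
      show ℓ (π (i :: j :: t0)) = (i :: j :: t0).length
      rw [hu2prod]
      simp only [List.length_cons]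
      omega
    have hdesc_j' : ℓ (s j * π (i :: j :: t0)) < ℓ (π (i :: j :: t0)) := by
      rw [hu2prod]; omega
    obtain ⟨m, hm, hmeq⟩ := leftExchange cs hdesc_j'
    rw [hu2prod] at hmeq
    rcases m with _ | m
    · -- m = 0 : s j * w = π (j :: t0) = s i * w
      rw [List.eraseIdx_cons_zero, cs.wordProd_cons, hpt0,
        cs.simple_mul_simple_cancel_left] at hmeq
      exact hsne (mul_right_cancel hmeq).symm
    rcases m with _ | m
    · -- m = 1 : s j * w = π (i :: t0) = s i * (s j * (s i * w))
      rw [List.eraseIdx_cons_succ, List.eraseIdx_cons_zero, cs.wordProd_cons, hpt0] at hmeq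
      have h9 : s j = s i * s j * s i := by
        apply mul_right_cancel (b := w)
        rw [hmeq]
        simp [mul_assoc]
      apply simple_braid_sq_ne_one cs hsl hij h3
      have h10 : s j * s i = s i * s j := by
        have := congrArg (fun x => x * s i) h9
        simpa [mul_assoc] using this
      calc s i * s j * (s i * s j) = s i * (s j * s i) * s j := by simp [mul_assoc]
        _ = s i * (s i * s j) * s j := by rw [h10]
        _ = 1 := by simp [mul_assoc]
    · -- m ≥ 2
      rw [List.eraseIdx_cons_succ, List.eraseIdx_cons_succ, cs.wordProd_cons,
        cs.wordProd_cons] at hmeq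
      have hmlt : m < t0.length := by
        simp only [List.length_cons] at hm; omega
      set y := π (t0.eraseIdx m) with hydef
      have hly : ℓ y ≤ n - 3 := by
        have h1 : ℓ y ≤ (t0.eraseIdx m).length := cs.length_wordProd_le _
        have := List.length_eraseIdx_add_one hmlt
        omega
      -- hmeq : s j * w = s i * (s j * y)
      have hz : s i * (s j * (s i * w)) = y := by
        have hbr := braid_rel cs h3
        have e1 : s i * (s j * (s i * w)) = (s i * s j * s i) * w := by simp [mul_assoc]
        rw [e1, hbr, show (s j * s i * s j) * w = s j * (s i * (s j * w)) by simp [mul_assoc],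
          hmeq, cs.simple_mul_simple_cancel_left, cs.simple_mul_simple_cancel_left]
      obtain ⟨r, hrred, hrw⟩ := cs.exists_reduced_word' y
      have hbadprod : π (i :: j :: i :: r) = w := by
        rw [cs.wordProd_cons, cs.wordProd_cons, cs.wordProd_cons, ← hrw, ← hz,
          cs.simple_mul_simple_cancel_left, cs.simple_mul_simple_cancel_left,
          cs.simple_mul_simple_cancel_left]
      have hrlen : ℓ y = r.length := by rw [hrw]; exact hrred
      have hbadred : cs.IsReduced (i :: j :: i :: r) := by
        show ℓ (π (i :: j :: i :: r)) = (i :: j :: i :: r).length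
        have hle := cs.length_wordProd_le (i :: j :: i :: r)
        rw [hbadprod, hlw] at hle
        rw [hbadprod, hlw]
        simp only [List.length_cons] at hle ⊢
        omega
      exact hw ⟨i :: j :: i :: r, i, j, hbadred, hbadprod, hM2, hij, ⟨[], r, rfl⟩⟩
  -- M i j = 2 : the commuting case
  have hcomm : s i * s j = s j * s i := comm_rel cs hM2
  have hpjt0 : π (j :: t0) = s i * w := by
    rw [cs.wordProd_cons, hpt0, cs.simple_mul_simple_cancel_left]
  have hpit0 : π (i :: t0) = s j * w := by
    rw [cs.wordProd_cons, hpt0, show s i * (s j * (s i * w)) = (s i * s j) * (s i * w) by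
      simp [mul_assoc], hcomm]
    simp [mul_assoc]
  have hjt0red : cs.IsReduced (j :: t0) := by
    show ℓ (π (j :: t0)) = (j :: t0).length
    rw [hpjt0, hliw]
    simp only [List.length_cons]
    omega
  have hit0red : cs.IsReduced (i :: t0) := by
    show ℓ (π (i :: t0)) = (i :: t0).length
    rw [hpit0, hljw]
    simp only [List.length_cons]
    omega
  have h1 : Relation.ReflTransGen (CommMove M) u' (j :: t0) :=
    ih u'.length (by omega) (s i * w) hnbi u' (j :: t0) hu'red hjt0red hpu' hpjt0 rfl
  have h2 : Relation.ReflTransGen (CommMove M) v' (i :: t0) :=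
    ih v'.length (by omega) (s j * w) hnbj v' (i :: t0) hv'red hit0red hpv' hpit0 rfl
  have hmove : CommMove M (i :: j :: t0) (j :: i :: t0) := ⟨[], t0, i, j, hM2, rfl, rfl⟩
  exact Relation.ReflTransGen.trans (rtg_cons i h1)
    (Relation.ReflTransGen.trans (Relation.ReflTransGen.single hmove)
      (rtg_cons j (rtg_symm h2)))

end StembridgeMain


/-- In a simply-laced Coxeter group (all off-diagonal bonds are `2` or `3`), an element `w`
is fully commutative if and only if no reduced word for `w` contains a subword `[i, j, i]`
with `sᵢ`, `sⱼ` non-commuting. -/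
theorem fullyCommutative_iff_no_braid {B W : Type*} [Group W] {M : CoxeterMatrix B}
    (cs : CoxeterSystem M W) (hsl : ∀ i j : B, i ≠ j → M i j = 2 ∨ M i j = 3) (w : W) :
    FullyCommutative cs w ↔
      ¬ ∃ (u : List B) (i j : B), cs.IsReduced u ∧ cs.wordProd u = w ∧
          M i j ≠ 2 ∧ i ≠ j ∧ [i, j, i] <:+: u := by
  classical
  constructor
  · -- fully commutative → no braid pattern
    rintro hfc ⟨u, i, j, hured, huprod, hM2, hij, hinf⟩
    have h3 : M i j = 3 := (hsl i j hij).resolve_left hM2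
    obtain ⟨x, y, rfl⟩ := hinf
    set v := x ++ [j, i, j] ++ y with hvdef
    have hbr := StembridgeMain.braid_rel cs h3
    have hprod_eq : cs.wordProd v = cs.wordProd (x ++ [i, j, i] ++ y) := by
      rw [hvdef, cs.wordProd_append, cs.wordProd_append, cs.wordProd_append,
        cs.wordProd_append]
      congr 1
      congr 1
      have e1 : cs.wordProd [i, j, i] = cs.simple i * cs.simple j * cs.simple i := by
        simp [cs.wordProd_cons, cs.wordProd_nil, mul_assoc]
      have e2 : cs.wordProd [j, i, j] = cs.simple j * cs.simple i * cs.simple j := by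
        simp [cs.wordProd_cons, cs.wordProd_nil, mul_assoc]
      rw [e1, e2, hbr]
    have hvred : cs.IsReduced v := by
      show cs.length (cs.wordProd v) = v.length
      rw [hprod_eq, hured]
      simp [hvdef]
    have hrtg := hfc (x ++ [i, j, i] ++ y) v hured hvred huprod (hprod_eq.trans huprod)
    have hcount := StembridgeMain.rtg_count hrtg i
    rw [hvdef] at hcount
    simp only [List.count_append, List.count_cons, List.count_nil] at hcount
    have hbeq1 : (i == i) = true := by simp
    have hbeq2 : (j == i) = false := beq_eq_false_iff_ne.mpr (Ne.symm hij)
    rw [hbeq1, hbeq2] at hcount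
    norm_num at hcount
  · -- no braid pattern → fully commutative
    intro hnb u v hured hvred huprod hvprod
    exact StembridgeMain.main_induction cs hsl u.length w hnb u v hured hvred huprod hvprod rfl
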